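/- Let T be an m×n matrix with entries in {0,1} and T̃ an approximation with ‖T − T̃‖_F ≤ ε‖T‖_F for 0 < ε < 1 and T̃ ≠ 0. Call a pair (i,j) bad if T_{ij}=0. Then the probability that a sample from T̃ (i.e., pair (i,j) drawn with probability T̃_{ij}²/‖T̃‖_F²) is bad is at most (ε/(1−ε))². -/

import Mathlib

noncomputable def frob {m n : ℕ} (A : Matrix (Fin m) (Fin n) ℝ) : ℝ :=
  Real.sqrt (∑ i, ∑ j, (A i j)^2)

lemma frob_eq {m n : ℕ} (A : Matrix (Fin m) (Fin n) ℝ) :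
    frob A = ‖(WithLp.equiv 2 ((Fin m × Fin n) → ℝ)).symm (fun p => A p.1 p.2)‖ := by
  rw [EuclideanSpace.norm_eq, frob]
  congr 1
  rw [Fintype.sum_prod_type]
  simp [WithLp.equiv_symm_apply, PiLp.toLp_apply, Real.norm_eq_abs, sq_abs]

lemma frob_nonneg {m n : ℕ} (A : Matrix (Fin m) (Fin n) ℝ) : 0 ≤ frob A :=
  Real.sqrt_nonneg _

lemma frob_sq {m n : ℕ} (A : Matrix (Fin m) (Fin n) ℝ) :
    (frob A)^2 = ∑ i, ∑ j, (A i j)^2 := by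
  rw [frob, Real.sq_sqrt]
  positivity

lemma frob_tri {m n : ℕ} (A B : Matrix (Fin m) (Fin n) ℝ) :
    frob A ≤ frob (A - B) + frob B := by
  rw [frob_eq, frob_eq, frob_eq]
  have : (WithLp.equiv 2 ((Fin m × Fin n) → ℝ)).symm (fun p => A p.1 p.2)
      = (WithLp.equiv 2 ((Fin m × Fin n) → ℝ)).symm (fun p => (A - B) p.1 p.2)
        + (WithLp.equiv 2 ((Fin m × Fin n) → ℝ)).symm (fun p => B p.1 p.2) := by
    rw [WithLp.equiv_symm_apply, ← WithLp.toLp_add]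
    congr 1
    funext p
    simp [Matrix.sub_apply]
  rw [this]
  exact norm_add_le _ _

theorem stmt1 {m n : ℕ} (T Tt : Matrix (Fin m) (Fin n) ℝ) (ε : ℝ)
    (hT : ∀ i j, T i j = 0 ∨ T i j = 1)
    (hε0 : 0 < ε) (hε1 : ε < 1)
    (h : frob (T - Tt) ≤ ε * frob T)
    (hTt : Tt ≠ 0) :
    (∑ i, ∑ j, if T i j = 0 then (Tt i j)^2 else 0) / (∑ i, ∑ j, (Tt i j)^2)
      ≤ (ε / (1 - ε))^2 := by
  set B := ∑ i, ∑ j, if T i j = 0 then (Tt i j)^2 else 0 with hB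
  set D := ∑ i, ∑ j, (Tt i j)^2 with hD
  have hDpos : 0 < D := by
    rcases lt_or_ge 0 D with h' | h'
    · exact h'
    · exfalso
      apply hTt
      have hzero : ∀ i ∈ Finset.univ, (∑ j, (Tt i j)^2) = 0 := by
        rw [← Finset.sum_eq_zero_iff_of_nonneg (fun i _ => by positivity)]
        have : (0:ℝ) ≤ D := by positivity
        linarith
      funext i j
      have := hzero i (Finset.mem_univ i)
      rw [Finset.sum_eq_zero_iff_of_nonneg (fun j _ => by positivity)] at this
      have := this j (Finset.mem_univ j)
      simpa [pow_eq_zero_iff] using this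
  rw [div_le_iff₀ hDpos]
  -- B ≤ frob (T - Tt) ^ 2
  have hBle : B ≤ (frob (T - Tt))^2 := by
    rw [frob_sq]
    apply Finset.sum_le_sum
    intro i _
    apply Finset.sum_le_sum
    intro j _
    by_cases hij : T i j = 0
    · simp [hij, Matrix.sub_apply]
    · simp only [hij, if_false]
      positivity
  have hE : (frob (T - Tt))^2 ≤ ε^2 * (frob T)^2 := by
    have := mul_self_le_mul_self (frob_nonneg (T - Tt)) h
    nlinarith [frob_nonneg (T - Tt), frob_nonneg T]
  have htri : frob T ≤ frob (T - Tt) + frob Tt := frob_tri T Tt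
  have hd : (1 - ε) * frob T ≤ frob Tt := by nlinarith [frob_nonneg T]
  have h1ε : (0:ℝ) < 1 - ε := by linarith
  have hDge : (1 - ε)^2 * (frob T)^2 ≤ D := by
    have h0 : 0 ≤ (1 - ε) * frob T := mul_nonneg h1ε.le (frob_nonneg T)
    have := mul_self_le_mul_self h0 hd
    rw [hD, ← frob_sq]
    nlinarith
  have h1ε : (0:ℝ) < 1 - ε := by linarith
  calc B ≤ ε^2 * (frob T)^2 := le_trans hBle hE
    _ = (ε / (1 - ε))^2 * ((1 - ε)^2 * (frob T)^2) := by
        field_simp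
    _ ≤ (ε / (1 - ε))^2 * D := by
        apply mul_le_mul_of_nonneg_left hDge
        positivity
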